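/- arXiv:2305.12051 — 3 statements merged into one kernel-verified Lean document; each statement's English description precedes it below -/
import Mathlib

section
/- For x in the open unit disc, ₂F₁(1/3,1/3;2/3;x) · ₂F₁(−1/3,2/3;1/3;x) + (x/2) · ₂F₁(2/3,2/3;4/3;x) · ₂F₁(1/3,4/3;5/3;x) = 1. -/
open scoped BigOperators

/-- The Pochhammer symbol `(a)ₙ = a(a+1)⋯(a+n−1)`. -/
noncomputable def poch (a : ℂ) (n : ℕ) : ℂ := ∏ i ∈ Finset.range n, (a + i)

/-- The Gauss hypergeometric series `₂F₁(a,b;c;x) = Σ (a)ₙ(b)ₙ/((c)ₙ n!) xⁿ`. -/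
noncomputable def F21 (a b c x : ℂ) : ℂ :=
  ∑' n : ℕ, poch a n * poch b n / (poch c n * (n.factorial : ℂ)) * x ^ n

namespace HGaux

lemma poch_zero (a : ℂ) : poch a 0 = 1 := by simp [poch]

lemma poch_succ (a : ℂ) (n : ℕ) : poch a (n + 1) = poch a n * (a + n) := by
  simp [poch, Finset.prod_range_succ]

lemma poch_succ' (a : ℂ) (n : ℕ) : poch a (n + 1) = a * poch (a + 1) n := by
  rw [poch, Finset.prod_range_succ']
  rw [mul_comm]
  congr 1
  · push_cast; ring
  · apply Finset.prod_congr rfl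
    intro i _
    push_cast; ring

lemma poch_one_eq (n : ℕ) : poch 1 n = (n.factorial : ℂ) := by
  induction n with
  | zero => simp [poch_zero]
  | succ m ih => rw [poch_succ, ih, Nat.factorial_succ]; push_cast; ring

lemma poch_ofReal_ne_zero {r : ℝ} (hr : 0 < r) (n : ℕ) : poch (r : ℂ) n ≠ 0 := by
  rw [poch]; apply Finset.prod_ne_zero_iff.mpr; intro i _ h
  have h2 := congrArg Complex.re h
  simp only [Complex.add_re, Complex.ofReal_re, Complex.natCast_re, Complex.zero_re] at h2
  have : (0:ℝ) ≤ (i:ℝ) := Nat.cast_nonneg i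
  linarith

lemma norm_poch_le {r s : ℝ} (h : ∀ i : ℕ, |r + i| ≤ |s + i|) (n : ℕ) :
    ‖poch (r : ℂ) n‖ ≤ ‖poch (s : ℂ) n‖ := by
  rw [poch, poch, norm_prod, norm_prod]
  apply Finset.prod_le_prod
  · intro i _; exact norm_nonneg _
  · intro i _
    have e1 : ((r:ℂ) + i) = ((r + i : ℝ) : ℂ) := by push_cast; ring
    have e2 : ((s:ℂ) + i) = ((s + i : ℝ) : ℂ) := by push_cast; ring
    rw [e1, e2, Complex.norm_real, Complex.norm_real]
    exact h i

/-- coefficient of the hypergeometric series -/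
noncomputable def cf (a b c : ℂ) (n : ℕ) : ℂ :=
  poch a n * poch b n / (poch c n * (n.factorial : ℂ))

lemma norm_cf_le_one {ra rb rc : ℝ} (hc : 0 < rc) (n : ℕ)
    (h1 : ∀ i : ℕ, |ra + i| ≤ |rc + i|) (h2 : ∀ i : ℕ, |rb + i| ≤ |1 + (i:ℝ)|) :
    ‖cf (ra : ℂ) (rb : ℂ) (rc : ℂ) n‖ ≤ 1 := by
  have hpc : poch (rc : ℂ) n ≠ 0 := poch_ofReal_ne_zero hc n
  have hfac : ((n.factorial : ℂ)) ≠ 0 := Nat.cast_ne_zero.mpr n.factorial_ne_zero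
  rw [cf, norm_div, norm_mul, norm_mul]
  rw [div_le_one (mul_pos (norm_pos_iff.mpr hpc) (norm_pos_iff.mpr hfac))]
  have b1 : ‖poch (ra : ℂ) n‖ ≤ ‖poch (rc : ℂ) n‖ := norm_poch_le h1 n
  have b2 : ‖poch (rb : ℂ) n‖ ≤ ‖(n.factorial : ℂ)‖ := by
    rw [← poch_one_eq]
    have := norm_poch_le (r := rb) (s := 1) h2 n
    simpa using this
  exact mul_le_mul b1 b2 (norm_nonneg _) (norm_nonneg _)

lemma norm_cf_le_one' {ra rb rc : ℝ} (hc : 0 < rc) (n : ℕ)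
    (h1 : ∀ i : ℕ, |ra + i| ≤ |1 + (i:ℝ)|) (h2 : ∀ i : ℕ, |rb + i| ≤ |rc + i|) :
    ‖cf (ra : ℂ) (rb : ℂ) (rc : ℂ) n‖ ≤ 1 := by
  have hpc : poch (rc : ℂ) n ≠ 0 := poch_ofReal_ne_zero hc n
  have hfac : ((n.factorial : ℂ)) ≠ 0 := Nat.cast_ne_zero.mpr n.factorial_ne_zero
  rw [cf, norm_div, norm_mul, norm_mul]
  rw [div_le_one (mul_pos (norm_pos_iff.mpr hpc) (norm_pos_iff.mpr hfac))]
  have b2 : ‖poch (rb : ℂ) n‖ ≤ ‖poch (rc : ℂ) n‖ := norm_poch_le h2 n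
  have b1 : ‖poch (ra : ℂ) n‖ ≤ ‖(n.factorial : ℂ)‖ := by
    rw [← poch_one_eq]
    have := norm_poch_le (r := ra) (s := 1) h1 n
    simpa using this
  calc ‖poch (ra:ℂ) n‖ * ‖poch (rb:ℂ) n‖ ≤ ‖(n.factorial : ℂ)‖ * ‖poch (rc:ℂ) n‖ :=
        mul_le_mul b1 b2 (norm_nonneg _) (norm_nonneg _)
    _ = ‖poch (rc:ℂ) n‖ * ‖(n.factorial : ℂ)‖ := mul_comm _ _

lemma summable_aux {a b c : ℂ} (hb : ∀ n, ‖cf a b c n‖ ≤ 1) {x : ℂ} (hx : ‖x‖ < 1) :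
    Summable fun n : ℕ => ‖cf a b c n * x ^ n‖ := by
  refine Summable.of_nonneg_of_le (f := fun n : ℕ => ‖x‖ ^ n) (fun n => norm_nonneg _)
    (fun n => ?_) (summable_geometric_of_lt_one (norm_nonneg x) hx)
  rw [norm_mul, norm_pow]
  calc ‖cf a b c n‖ * ‖x‖ ^ n ≤ 1 * ‖x‖ ^ n :=
        mul_le_mul_of_nonneg_right (hb n) (by positivity)
    _ = ‖x‖ ^ n := one_mul _

noncomputable def fc (n : ℕ) : ℂ := cf (1/3) (1/3) (2/3) n
noncomputable def gc (n : ℕ) : ℂ := cf (2/3) (2/3) (4/3) n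
noncomputable def hc (n : ℕ) : ℂ := cf (-1/3) (2/3) (1/3) n
noncomputable def kc (n : ℕ) : ℂ := cf (1/3) (4/3) (5/3) n

lemma p13 (n : ℕ) : poch (1/3 : ℂ) n ≠ 0 := by
  have := poch_ofReal_ne_zero (r := 1/3) (by norm_num) n
  simpa [Complex.ofReal_div] using this
lemma p23 (n : ℕ) : poch (2/3 : ℂ) n ≠ 0 := by
  have := poch_ofReal_ne_zero (r := 2/3) (by norm_num) n
  simpa [Complex.ofReal_div] using this
lemma p43 (n : ℕ) : poch (4/3 : ℂ) n ≠ 0 := by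
  have := poch_ofReal_ne_zero (r := 4/3) (by norm_num) n
  simpa [Complex.ofReal_div] using this
lemma p53 (n : ℕ) : poch (5/3 : ℂ) n ≠ 0 := by
  have := poch_ofReal_ne_zero (r := 5/3) (by norm_num) n
  simpa [Complex.ofReal_div] using this
lemma facC (n : ℕ) : ((n.factorial : ℂ)) ≠ 0 := Nat.cast_ne_zero.mpr n.factorial_ne_zero
lemma nz_lin (n a b : ℕ) (hb : b ≠ 0) : ((a:ℂ)*(n:ℂ)+(b:ℂ)) ≠ 0 := by
  have e : (((a*n+b : ℕ)):ℂ) = (a:ℂ)*(n:ℂ)+(b:ℂ) := by push_cast; ring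
  rw [← e]
  exact Nat.cast_ne_zero.mpr (by omega)
lemma nz2 {r : ℝ} (hr : 0 < r) (k : ℕ) : ((r:ℂ) + (k:ℕ)) ≠ 0 := by
  intro h
  have h2 := congrArg Complex.re h
  simp only [Complex.add_re, Complex.ofReal_re, Complex.natCast_re, Complex.zero_re] at h2
  have : (0:ℝ) ≤ (k:ℝ) := Nat.cast_nonneg k
  linarith

lemma L1' (m : ℕ) : (3*(m:ℂ)+3) * hc (m+1) = -(3*(m:ℂ)+2) * gc m := by
  rw [hc, gc]
  have e1 : poch (-1/3 : ℂ) (m+1) = (-1/3 : ℂ) * poch (2/3) m := by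
    rw [poch_succ']; norm_num
  have e2 : poch (1/3 : ℂ) (m+1) = (1/3 : ℂ) * poch (4/3) m := by
    rw [poch_succ']; norm_num
  rw [cf, cf, e1, e2, poch_succ, Nat.factorial_succ]
  have h4 := p43 m
  have hf := facC m
  have h1 : (3*(m:ℂ)+3) ≠ 0 := by simpa using nz_lin m 3 3 (by norm_num)
  have hm1 : ((m:ℂ)+1) ≠ 0 := by simpa using nz_lin m 1 1 (by norm_num)
  have c1 : ((2:ℂ)/3 + (m:ℂ)) ≠ 0 := by
    have := nz2 (r := 2/3) (by norm_num) m; push_cast at this; exact this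
  push_cast
  field_simp
  ring

lemma L2' (m : ℕ) : (3*(m:ℂ)+1) * kc m = 6*((m:ℂ)+1) * fc (m+1) := by
  rw [kc, fc]
  have e2 : poch (2/3 : ℂ) (m+1) = (2/3 : ℂ) * poch (5/3) m := by
    rw [poch_succ']; norm_num
  have key : poch (4/3 : ℂ) m = 3 * (poch (1/3) m * ((1:ℂ)/3 + m)) := by
    have a1 : poch (1/3 : ℂ) (m+1) = (1/3 : ℂ) * poch (4/3) m := by
      rw [poch_succ']; norm_num
    have a2 : poch (1/3 : ℂ) (m+1) = poch (1/3) m * ((1:ℂ)/3 + m) := poch_succ _ m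
    rw [a2] at a1
    linear_combination 3 * a1.symm
  rw [cf, cf, poch_succ, e2, Nat.factorial_succ, key]
  have h5 := p53 m
  have hf := facC m
  have h1 : (3*(m:ℂ)+1) ≠ 0 := by simpa using nz_lin m 3 1 (by norm_num)
  have hm1 : ((m:ℂ)+1) ≠ 0 := by simpa using nz_lin m 1 1 (by norm_num)
  have c1 : ((1:ℂ)/3 + (m:ℂ)) ≠ 0 := by
    have := nz2 (r := 1/3) (by norm_num) m; push_cast at this; exact this
  push_cast
  field_simp
  ring

lemma L3' (k : ℕ) : ((3*(k:ℂ)+3)*(3*(k:ℂ)+2)) * fc (k+1) = (3*(k:ℂ)+1)^2 * fc k := by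
  rw [fc, fc, cf, cf, poch_succ, poch_succ, Nat.factorial_succ]
  have h2 := p23 k
  have hf := facC k
  have h1 : (3*(k:ℂ)+2) ≠ 0 := by simpa using nz_lin k 3 2 (by norm_num)
  have h3 : (3*(k:ℂ)+3) ≠ 0 := by simpa using nz_lin k 3 3 (by norm_num)
  have c1 : ((2:ℂ)/3 + (k:ℂ)) ≠ 0 := by
    have := nz2 (r := 2/3) (by norm_num) k; push_cast at this; exact this
  have hk1 : ((k:ℂ)+1) ≠ 0 := by simpa using nz_lin k 1 1 (by norm_num)
  push_cast
  rw [mul_div_assoc', mul_div_assoc',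
    div_eq_div_iff (mul_ne_zero (mul_ne_zero h2 c1) (mul_ne_zero hk1 hf))
      (mul_ne_zero h2 hf)]
  ring

lemma L4' (k : ℕ) : ((3*(k:ℂ)+3)*(3*(k:ℂ)+4)) * gc (k+1) = (3*(k:ℂ)+2)^2 * gc k := by
  rw [gc, gc, cf, cf, poch_succ, poch_succ, Nat.factorial_succ]
  have h2 := p43 k
  have hf := facC k
  have h1 : (3*(k:ℂ)+4) ≠ 0 := by simpa using nz_lin k 3 4 (by norm_num)
  have h3 : (3*(k:ℂ)+3) ≠ 0 := by simpa using nz_lin k 3 3 (by norm_num)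
  have c1 : ((4:ℂ)/3 + (k:ℂ)) ≠ 0 := by
    have := nz2 (r := 4/3) (by norm_num) k; push_cast at this; exact this
  have hk1 : ((k:ℂ)+1) ≠ 0 := by simpa using nz_lin k 1 1 (by norm_num)
  push_cast
  rw [mul_div_assoc', mul_div_assoc',
    div_eq_div_iff (mul_ne_zero (mul_ne_zero h2 c1) (mul_ne_zero hk1 hf))
      (mul_ne_zero h2 hf)]
  ring

lemma cf_zero (a b c : ℂ) : cf a b c 0 = 1 := by simp [cf, poch_zero]
lemma fc0 : fc 0 = 1 := cf_zero _ _ _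
lemma gc0 : gc 0 = 1 := cf_zero _ _ _
lemma hc0 : hc 0 = 1 := cf_zero _ _ _

noncomputable def Etel (n k : ℕ) : ℂ :=
  -((k:ℂ) * (3*(((n:ℂ)+1)-(k:ℂ))+1))/((n:ℂ)+1) * (fc k * gc (n+1-k))

lemma main (n : ℕ) :
    (∑ k ∈ Finset.range (n+2), fc k * hc (n+1-k))
      + (1/2) * ∑ k ∈ Finset.range (n+1), gc k * kc (n-k) = 0 := by
  have hn1 : ((n:ℂ)+1) ≠ 0 := by simpa using nz_lin n 1 1 one_ne_zero
  have hS2 : ∑ k ∈ Finset.range (n+1), gc k * kc (n-k)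
      = ∑ j ∈ Finset.range (n+1), gc (n-j) * kc j := by
    rw [← Finset.sum_range_reflect]
    apply Finset.sum_congr rfl
    intro j hj
    have hj' : j < n + 1 := Finset.mem_range.mp hj
    have e1 : n + 1 - 1 - j = n - j := by omega
    rw [e1]
    have e2 : n - (n - j) = j := by omega
    rw [e2]
  have tel : ∀ k ∈ Finset.range (n+1),
      fc k * hc (n+1-k) + (1/2) * (gc (n-k) * kc k) = Etel n (k+1) - Etel n k := by
    intro k hk
    have hk' : k < n+1 := Finset.mem_range.mp hk
    obtain ⟨m, rfl⟩ : ∃ m, n = k + m := ⟨n - k, by omega⟩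
    have i1 : k + m + 1 - k = m + 1 := by omega
    have i2 : k + m - k = m := by omega
    have i3 : k + m + 1 - (k + 1) = m := by omega
    rw [Etel, Etel, i1, i2, i3]
    have hm3 : (3*(m:ℂ)+3) ≠ 0 := by simpa using nz_lin m 3 3 (by norm_num)
    have hm4 : (3*(m:ℂ)+4) ≠ 0 := by simpa using nz_lin m 3 4 (by norm_num)
    have hk1 : (3*(k:ℂ)+1) ≠ 0 := by simpa using nz_lin k 3 1 (by norm_num)
    have hk2 : (3*(k:ℂ)+2) ≠ 0 := by simpa using nz_lin k 3 2 (by norm_num)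
    have hk3 : (3*(k:ℂ)+3) ≠ 0 := by simpa using nz_lin k 3 3 (by norm_num)
    have hkm : ((k:ℂ)+(m:ℂ)+1) ≠ 0 := by
      have := nz_lin (k+m) 1 1 one_ne_zero
      push_cast at this
      simpa using this
    have hQ : ((3*(m:ℂ)+3)*(3*(m:ℂ)+4)*(3*(k:ℂ)+1)*((3*(k:ℂ)+3)*(3*(k:ℂ)+2))) ≠ 0 :=
      mul_ne_zero (mul_ne_zero (mul_ne_zero hm3 hm4) hk1) (mul_ne_zero hk3 hk2)
    push_cast
    conv_rhs => rw [div_mul_eq_mul_div, div_mul_eq_mul_div, div_sub_div_same]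
    rw [eq_div_iff hkm]
    apply mul_left_cancel₀ hQ
    linear_combination
      ((3*(m:ℂ)+4)*(3*(k:ℂ)+1)*((3*(k:ℂ)+3)*(3*(k:ℂ)+2))*((k:ℂ)+(m:ℂ)+1)*fc k) * L1' m
      + ((3*(m:ℂ)+3)*(3*(m:ℂ)+4)*((3*(k:ℂ)+3)*(3*(k:ℂ)+2))*((k:ℂ)+(m:ℂ)+1)*gc m/2) * L2' k
      + (((k:ℂ)+1)*gc m*(3*(m:ℂ)+3)*(3*(m:ℂ)+4)*((3*(k:ℂ)+1)*(3*(m:ℂ)+1)+3*((k:ℂ)+(m:ℂ)+1))) * L3' k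
      + (-(k:ℂ)*(3*(m:ℂ)+4)*(3*(k:ℂ)+1)*((3*(k:ℂ)+3)*(3*(k:ℂ)+2))*fc k) * L4' m
  have sum_eq : ∑ k ∈ Finset.range (n+1),
      (fc k * hc (n+1-k) + (1/2) * (gc (n-k) * kc k)) = Etel n (n+1) - Etel n 0 := by
    rw [Finset.sum_congr rfl tel]
    exact Finset.sum_range_sub (Etel n) (n+1)
  have hE0 : Etel n 0 = 0 := by simp [Etel]
  have hEn : Etel n (n+1) = -fc (n+1) := by
    rw [Etel, show n+1-(n+1) = 0 from by omega, gc0]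
    push_cast
    field_simp
    ring
  have key2 : (∑ k ∈ Finset.range (n+1), fc k * hc (n+1-k))
      + ∑ k ∈ Finset.range (n+1), (1/2) * (gc (n-k) * kc k) = -fc (n+1) := by
    rw [← Finset.sum_add_distrib, sum_eq, hE0, hEn]; ring
  rw [hS2, Finset.sum_range_succ, show n+1-(n+1) = 0 from by omega, hc0, Finset.mul_sum]
  linear_combination key2

lemma fc_norm (n : ℕ) : ‖fc n‖ ≤ 1 := by
  have e1 : ((1/3 : ℝ) : ℂ) = (1/3 : ℂ) := by norm_num
  have e3 : ((2/3 : ℝ) : ℂ) = (2/3 : ℂ) := by norm_num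
  rw [fc, ← e1, ← e3]
  refine norm_cf_le_one (by norm_num) n (fun i => ?_) (fun i => ?_)
  · have h0 : (0:ℝ) ≤ i := Nat.cast_nonneg i
    rw [abs_of_nonneg (by linarith), abs_of_nonneg (by linarith)]; linarith
  · have h0 : (0:ℝ) ≤ i := Nat.cast_nonneg i
    rw [abs_of_nonneg (by linarith), abs_of_nonneg (by linarith)]; linarith

lemma gc_norm (n : ℕ) : ‖gc n‖ ≤ 1 := by
  have e1 : ((2/3 : ℝ) : ℂ) = (2/3 : ℂ) := by norm_num
  have e3 : ((4/3 : ℝ) : ℂ) = (4/3 : ℂ) := by norm_num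
  rw [gc, ← e1, ← e3]
  refine norm_cf_le_one (by norm_num) n (fun i => ?_) (fun i => ?_)
  · have h0 : (0:ℝ) ≤ i := Nat.cast_nonneg i
    rw [abs_of_nonneg (by linarith), abs_of_nonneg (by linarith)]; linarith
  · have h0 : (0:ℝ) ≤ i := Nat.cast_nonneg i
    rw [abs_of_nonneg (by linarith), abs_of_nonneg (by linarith)]; linarith

lemma hc_norm (n : ℕ) : ‖hc n‖ ≤ 1 := by
  have e1 : ((-1/3 : ℝ) : ℂ) = (-1/3 : ℂ) := by norm_num
  have e2 : ((2/3 : ℝ) : ℂ) = (2/3 : ℂ) := by norm_num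
  have e3 : ((1/3 : ℝ) : ℂ) = (1/3 : ℂ) := by norm_num
  rw [hc, ← e1, ← e2, ← e3]
  refine norm_cf_le_one (by norm_num) n (fun i => ?_) (fun i => ?_)
  · have h0 : (0:ℝ) ≤ i := Nat.cast_nonneg i
    have hr : |(1/3:ℝ) + i| = 1/3 + i := abs_of_nonneg (by linarith)
    rw [hr, abs_le]
    constructor <;> linarith
  · have h0 : (0:ℝ) ≤ i := Nat.cast_nonneg i
    rw [abs_of_nonneg (by linarith), abs_of_nonneg (by linarith)]; linarith

lemma kc_norm (n : ℕ) : ‖kc n‖ ≤ 1 := by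
  have e1 : ((1/3 : ℝ) : ℂ) = (1/3 : ℂ) := by norm_num
  have e2 : ((4/3 : ℝ) : ℂ) = (4/3 : ℂ) := by norm_num
  have e3 : ((5/3 : ℝ) : ℂ) = (5/3 : ℂ) := by norm_num
  rw [kc, ← e1, ← e2, ← e3]
  refine norm_cf_le_one' (by norm_num) n (fun i => ?_) (fun i => ?_)
  · have h0 : (0:ℝ) ≤ i := Nat.cast_nonneg i
    rw [abs_of_nonneg (by linarith), abs_of_nonneg (by linarith)]; linarith
  · have h0 : (0:ℝ) ≤ i := Nat.cast_nonneg i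
    rw [abs_of_nonneg (by linarith), abs_of_nonneg (by linarith)]; linarith

end HGaux

open HGaux in
/-- For `x` in the open unit disc,
`₂F₁(1/3,1/3;2/3;x)·₂F₁(−1/3,2/3;1/3;x) + (x/2)·₂F₁(2/3,2/3;4/3;x)·₂F₁(1/3,4/3;5/3;x) = 1`. -/
theorem hypergeometric_riemann_relation (x : ℂ) (hx : ‖x‖ < 1) :
    F21 (1/3) (1/3) (2/3) x * F21 (-1/3) (2/3) (1/3) x
      + x / 2 * F21 (2/3) (2/3) (4/3) x * F21 (1/3) (4/3) (5/3) x = 1 := by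
  have sf : Summable fun n : ℕ => ‖fc n * x ^ n‖ := summable_aux (fun n => fc_norm n) hx
  have sg : Summable fun n : ℕ => ‖gc n * x ^ n‖ := summable_aux (fun n => gc_norm n) hx
  have sh : Summable fun n : ℕ => ‖hc n * x ^ n‖ := summable_aux (fun n => hc_norm n) hx
  have sk : Summable fun n : ℕ => ‖kc n * x ^ n‖ := summable_aux (fun n => kc_norm n) hx
  -- Cauchy products
  set a1 : ℕ → ℂ :=
    fun n => ∑ k ∈ Finset.range (n+1), (fc k * x ^ k) * (hc (n-k) * x ^ (n-k)) with ha1def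
  set a2 : ℕ → ℂ :=
    fun n => ∑ k ∈ Finset.range (n+1), (gc k * x ^ k) * (kc (n-k) * x ^ (n-k)) with ha2def
  have P1 : F21 (1/3) (1/3) (2/3) x * F21 (-1/3) (2/3) (1/3) x = ∑' n : ℕ, a1 n :=
    tsum_mul_tsum_eq_tsum_sum_range_of_summable_norm sf sh
  have P2 : F21 (2/3) (2/3) (4/3) x * F21 (1/3) (4/3) (5/3) x = ∑' n : ℕ, a2 n :=
    tsum_mul_tsum_eq_tsum_sum_range_of_summable_norm sg sk
  have sA1 : Summable a1 := (summable_norm_sum_mul_range_of_summable_norm sf sh).of_norm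
  have sA2 : Summable a2 := (summable_norm_sum_mul_range_of_summable_norm sg sk).of_norm
  -- factored coefficient form
  have ha1 : ∀ n : ℕ, a1 n = (∑ k ∈ Finset.range (n+1), fc k * hc (n-k)) * x ^ n := by
    intro n
    rw [ha1def, Finset.sum_mul]
    apply Finset.sum_congr rfl
    intro k hk
    have hk' : k < n + 1 := Finset.mem_range.mp hk
    have hxp : x ^ k * x ^ (n-k) = x ^ n := by
      rw [← pow_add]; congr 1; omega
    calc fc k * x ^ k * (hc (n-k) * x ^ (n-k))
        = fc k * hc (n-k) * (x ^ k * x ^ (n-k)) := by ring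
      _ = fc k * hc (n-k) * x ^ n := by rw [hxp]
  have ha2 : ∀ n : ℕ, a2 n = (∑ k ∈ Finset.range (n+1), gc k * kc (n-k)) * x ^ n := by
    intro n
    rw [ha2def, Finset.sum_mul]
    apply Finset.sum_congr rfl
    intro k hk
    have hk' : k < n + 1 := Finset.mem_range.mp hk
    have hxp : x ^ k * x ^ (n-k) = x ^ n := by
      rw [← pow_add]; congr 1; omega
    calc gc k * x ^ k * (kc (n-k) * x ^ (n-k))
        = gc k * kc (n-k) * (x ^ k * x ^ (n-k)) := by ring
      _ = gc k * kc (n-k) * x ^ n := by rw [hxp]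
  -- the n-th shifted coefficient vanishes
  have hzero : ∀ n : ℕ, a1 (n+1) + x / 2 * a2 n = 0 := by
    intro n
    rw [ha1 (n+1), ha2 n]
    linear_combination (x ^ (n+1)) * main n
  have sA1' : Summable fun n : ℕ => a1 (n+1) := by
    exact (summable_nat_add_iff 1).mpr sA1
  have sA2' : Summable fun n : ℕ => x / 2 * a2 n := sA2.mul_left _
  have ha10 : a1 0 = 1 := by
    rw [ha1def]
    simp [Finset.sum_range_one, fc0, hc0]
  calc F21 (1/3) (1/3) (2/3) x * F21 (-1/3) (2/3) (1/3) x
      + x / 2 * F21 (2/3) (2/3) (4/3) x * F21 (1/3) (4/3) (5/3) x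
      = (∑' n : ℕ, a1 n) + x / 2 * ∑' n : ℕ, a2 n := by
        rw [P1, mul_assoc, P2]
    _ = (∑' n : ℕ, a1 n) + ∑' n : ℕ, x / 2 * a2 n := by rw [tsum_mul_left]
    _ = (a1 0 + ∑' n : ℕ, a1 (n+1)) + ∑' n : ℕ, x / 2 * a2 n := by
        rw [sA1.tsum_eq_zero_add]
    _ = a1 0 + ∑' n : ℕ, (a1 (n+1) + x / 2 * a2 n) := by
        rw [sA1'.tsum_add sA2', add_assoc]
    _ = a1 0 + ∑' n : ℕ, (0 : ℂ) := by
        congr 1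
        exact tsum_congr hzero
    _ = 1 := by rw [tsum_zero, ha10, add_zero]
end

section
/- For real parameters with Re(c+d−a−b₁−b₂)>0, Re(c−a−b′)>0 and Re(c+d−a−b₁−b₂−b′)>0, the double series F(x,y) = Σ_{m,n≥0} (a)_{m+n}(b₁)_m(b₂)_m(b′)_n / ((c)_{m+n}(d)_m) · x^m y^n/(m! n!) converges absolutely for |x| ≤ 1 and |y| ≤ 1. -/
open scoped BigOperators

open Finset

/-- The general term of the Kampé de Fériet hypergeometric function `F^{1;2;1}_{1;1;0}`:
`(a)_{m+n}(b₁)ₘ(b₂)ₘ(b′)ₙ / ((c)_{m+n}(d)ₘ) · xᵐ yⁿ/(m! n!)` for `p = (m, n)`. -/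
noncomputable def kampeTerm (a b₁ b₂ b' c d x y : ℂ) (p : ℕ × ℕ) : ℂ :=
  poch a (p.1 + p.2) * poch b₁ p.1 * poch b₂ p.1 * poch b' p.2
    / (poch c (p.1 + p.2) * poch d p.1)
    * x ^ p.1 * y ^ p.2 / ((p.1.factorial : ℂ) * (p.2.factorial : ℂ))


lemma aux_log_le {s : ℝ} (hs : 0 ≤ s) : Real.log (1+s) ≤ s := by
  have := Real.log_le_sub_one_of_pos (x := 1+s) (by linarith)
  linarith

lemma aux_log_ge {t : ℝ} (ht : 0 < 1+t) : 1 - (1+t)⁻¹ ≤ Real.log (1+t) := by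
  have h := Real.log_le_sub_one_of_pos (x := (1+t)⁻¹) (by positivity)
  rw [Real.log_inv] at h
  linarith

lemma aux_sub_log {s : ℝ} (hs : 0 ≤ s) : s - Real.log (1+s) ≤ s^2 := by
  have h1 : 0 < 1+s := by linarith
  have h := aux_log_ge h1
  have h2 : 1 - (1+s)⁻¹ = s/(1+s) := by field_simp; ring
  rw [h2] at h
  have h3 : s - s/(1+s) = s^2/(1+s) := by field_simp; ring
  have h4 : s^2/(1+s) ≤ s^2 := by
    apply div_le_self (by positivity) (by linarith)
  linarith

lemma aux_log_nonneg {s : ℝ} (hs : 0 ≤ s) : 0 ≤ s - Real.log (1+s) := by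
  have := aux_log_le hs; linarith

lemma sum_inv_sq (n : ℕ) : ∑ k ∈ range n, (1/((k:ℝ)+1))^2 ≤ 2 := by
  have key : ∀ n : ℕ, ∑ k ∈ range (n+1), (1/((k:ℝ)+1))^2 ≤ 2 - 1/((n:ℝ)+1) := by
    intro n
    induction n with
    | zero => norm_num
    | succ n ih =>
      rw [Finset.sum_range_succ]
      have hn : (0:ℝ) < (n:ℝ)+1 := by positivity
      have hn2 : (0:ℝ) < (n:ℝ)+2 := by positivity
      have hstep : (1/((n:ℝ)+1+1))^2 ≤ 1/((n:ℝ)+1) - 1/((n:ℝ)+1+1) := by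
        rw [div_sub_div _ _ (by linarith) (by linarith), div_pow,
          div_le_div_iff₀ (by positivity) (by positivity)]
        nlinarith
      push_cast at ih ⊢
      linarith
  match n with
  | 0 => simp
  | Nat.succ m =>
    have h := key m
    have h2 : (0:ℝ) < 1/((m:ℝ)+1) := by positivity
    push_cast at h ⊢
    linarith

lemma tele (K : ℕ) : ∀ n : ℕ, K ≤ n → ∏ k ∈ Finset.Ico K n, (1+1/((k:ℝ)+1)) = ((n:ℝ)+1)/((K:ℝ)+1) := by
  intro n
  induction n with
  | zero => intro h; simp at h; subst h; simp
  | succ n ih =>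
    intro h
    rcases Nat.lt_or_ge K (n+1) with h'' | h''
    · have hKn : K ≤ n := by omega
      rw [Finset.prod_Ico_succ_top hKn, ih hKn]
      have h1 : ((n:ℝ)+1) ≠ 0 := by positivity
      have h2 : ((K:ℝ)+1) ≠ 0 := by positivity
      push_cast
      field_simp
    · have : K = n+1 := by omega
      subst this
      simp only [Finset.Ico_self, Finset.prod_empty]
      rw [eq_comm, div_self (by positivity)]

lemma core (f : ℕ → ℝ) (hf : ∀ k, 0 ≤ f k) (δ M : ℝ) (K : ℕ)
    (h : ∀ k, K ≤ k → f k ≤ (1 + 1/((k:ℝ)+1))^δ * Real.exp (M * (1/((k:ℝ)+1))^2)) :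
    ∃ C, 0 < C ∧ ∀ n, ∏ k ∈ range n, f k ≤ C * ((n:ℝ)+1)^δ := by
  set C₁ := ∑ j ∈ range (K+1), (∏ k ∈ range j, f k) * ((j:ℝ)+1)^(-δ) with hC₁
  set C₂ := (∏ k ∈ range K, f k) * ((K:ℝ)+1)^(-δ) * Real.exp (2*|M|) with hC₂
  have hC₁0 : 0 ≤ C₁ := Finset.sum_nonneg fun j _ =>
    mul_nonneg (Finset.prod_nonneg fun k _ => hf k) (Real.rpow_nonneg (by positivity) _)
  have hC₂0 : 0 ≤ C₂ :=
    mul_nonneg (mul_nonneg (Finset.prod_nonneg fun k _ => hf k)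
      (Real.rpow_nonneg (by positivity) _)) (Real.exp_nonneg _)
  refine ⟨C₁ + C₂ + 1, by linarith, fun n => ?_⟩
  have hrp : (0:ℝ) < ((n:ℝ)+1)^δ := by positivity
  rcases Nat.lt_or_ge K n with hKn | hKn
  · -- n > K
    have hsplit : ∏ k ∈ range n, f k = (∏ k ∈ range K, f k) * ∏ k ∈ Finset.Ico K n, f k := by
      rw [Finset.range_eq_Ico, ← Finset.prod_Ico_consecutive _ (Nat.zero_le K) (le_of_lt hKn),
        ← Finset.range_eq_Ico]
    have hIco : ∏ k ∈ Finset.Ico K n, f k ≤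
        (((n:ℝ)+1)/((K:ℝ)+1))^δ * Real.exp (M * ∑ k ∈ Finset.Ico K n, (1/((k:ℝ)+1))^2) := by
      calc ∏ k ∈ Finset.Ico K n, f k
          ≤ ∏ k ∈ Finset.Ico K n, ((1 + 1/((k:ℝ)+1))^δ * Real.exp (M * (1/((k:ℝ)+1))^2)) := by
            apply Finset.prod_le_prod (fun k _ => hf k)
            intro k hk
            exact h k (Finset.mem_Ico.mp hk).1
        _ = (∏ k ∈ Finset.Ico K n, (1 + 1/((k:ℝ)+1))^δ) *
              ∏ k ∈ Finset.Ico K n, Real.exp (M * (1/((k:ℝ)+1))^2) := Finset.prod_mul_distrib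
        _ = (((n:ℝ)+1)/((K:ℝ)+1))^δ * Real.exp (M * ∑ k ∈ Finset.Ico K n, (1/((k:ℝ)+1))^2) := by
            rw [Real.finset_prod_rpow _ _ (fun k _ => by positivity), tele K n (le_of_lt hKn),
              ← Real.exp_sum, Finset.mul_sum]
    have hexp : Real.exp (M * ∑ k ∈ Finset.Ico K n, (1/((k:ℝ)+1))^2) ≤ Real.exp (2*|M|) := by
      apply Real.exp_le_exp.2
      have hs0 : 0 ≤ ∑ k ∈ Finset.Ico K n, (1/((k:ℝ)+1))^2 :=
        Finset.sum_nonneg fun k _ => by positivity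
      have hs2 : ∑ k ∈ Finset.Ico K n, (1/((k:ℝ)+1))^2 ≤ 2 := by
        calc ∑ k ∈ Finset.Ico K n, (1/((k:ℝ)+1))^2
            ≤ ∑ k ∈ range n, (1/((k:ℝ)+1))^2 := by
              rw [Finset.range_eq_Ico]
              apply Finset.sum_le_sum_of_subset_of_nonneg
              · exact Finset.Ico_subset_Ico (Nat.zero_le K) le_rfl
              · intro k _ _; positivity
          _ ≤ 2 := sum_inv_sq n
      calc M * ∑ k ∈ Finset.Ico K n, (1/((k:ℝ)+1))^2 ≤ |M| * ∑ k ∈ Finset.Ico K n, (1/((k:ℝ)+1))^2 :=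
            mul_le_mul_of_nonneg_right (le_abs_self M) hs0
        _ ≤ |M| * 2 := mul_le_mul_of_nonneg_left hs2 (abs_nonneg M)
        _ = 2*|M| := by ring
    have hdiv : (((n:ℝ)+1)/((K:ℝ)+1))^δ = ((n:ℝ)+1)^δ * ((K:ℝ)+1)^(-δ) := by
      rw [Real.div_rpow (by positivity) (by positivity), Real.rpow_neg (by positivity), div_eq_mul_inv]
    calc ∏ k ∈ range n, f k
        = (∏ k ∈ range K, f k) * ∏ k ∈ Finset.Ico K n, f k := hsplit
      _ ≤ (∏ k ∈ range K, f k) * ((((n:ℝ)+1)/((K:ℝ)+1))^δ * Real.exp (2*|M|)) := by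
          apply mul_le_mul_of_nonneg_left _ (Finset.prod_nonneg fun k _ => hf k)
          calc ∏ k ∈ Finset.Ico K n, f k
              ≤ (((n:ℝ)+1)/((K:ℝ)+1))^δ * Real.exp (M * ∑ k ∈ Finset.Ico K n, (1/((k:ℝ)+1))^2) := hIco
            _ ≤ (((n:ℝ)+1)/((K:ℝ)+1))^δ * Real.exp (2*|M|) :=
                mul_le_mul_of_nonneg_left hexp (by positivity)
      _ = C₂ * ((n:ℝ)+1)^δ := by rw [hdiv, hC₂]; ring
      _ ≤ (C₁ + C₂ + 1) * ((n:ℝ)+1)^δ := by nlinarith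
  · -- n ≤ K
    have hmem : n ∈ range (K+1) := Finset.mem_range.mpr (by omega)
    have hle : (∏ k ∈ range n, f k) * ((n:ℝ)+1)^(-δ) ≤ C₁ :=
      Finset.single_le_sum (f := fun j => (∏ k ∈ range j, f k) * ((j:ℝ)+1)^(-δ))
        (fun j _ => mul_nonneg (Finset.prod_nonneg fun k _ => hf k)
          (Real.rpow_nonneg (by positivity) _)) hmem
    have hinv : ((n:ℝ)+1)^(-δ) * ((n:ℝ)+1)^δ = 1 := by
      rw [Real.rpow_neg (by positivity)]
      exact inv_mul_cancel₀ (ne_of_gt hrp)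
    calc ∏ k ∈ range n, f k = ((∏ k ∈ range n, f k) * ((n:ℝ)+1)^(-δ)) * ((n:ℝ)+1)^δ := by
          rw [mul_assoc, hinv, mul_one]
      _ ≤ C₁ * ((n:ℝ)+1)^δ := mul_le_mul_of_nonneg_right hle (le_of_lt hrp)
      _ ≤ (C₁ + C₂ + 1) * ((n:ℝ)+1)^δ := by nlinarith

lemma norm_sq_id (u : ℂ) (k : ℕ) :
    ‖u + (k:ℂ)‖^2 * (1/((k:ℝ)+1))^2 =
      1 + 2*(u.re-1)*(1/((k:ℝ)+1)) + ((u.re-1)^2+u.im^2)*(1/((k:ℝ)+1))^2 := by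
  have h1 : ‖u + (k:ℂ)‖^2 = (u.re+(k:ℝ))^2 + u.im^2 := by
    rw [Complex.sq_norm, Complex.normSq_apply]
    simp [Complex.add_re, Complex.add_im]
    ring
  have hk : ((k:ℝ)+1) * (1/((k:ℝ)+1)) = 1 := by
    rw [mul_one_div, div_self (by positivity)]
  rw [h1]
  linear_combination (((k:ℝ)+1)*(1/((k:ℝ)+1)) + 1 + 2*(u.re-1)*(1/((k:ℝ)+1))) * hk

lemma stepA (u : ℂ) : ∃ M : ℝ, ∀ k : ℕ,
    ‖u + (k:ℂ)‖/((k:ℝ)+1) ≤ (1 + 1/((k:ℝ)+1))^(u.re-1) * Real.exp (M * (1/((k:ℝ)+1))^2) := by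
  set A := u.re
  set R := (A-1)^2 + u.im^2 with hR
  refine ⟨|A-1| + R/2, fun k => ?_⟩
  set s := 1/((k:ℝ)+1) with hs
  have hs0 : 0 < s := by positivity
  have hs1 : s ≤ 1 := by rw [hs]; rw [div_le_one (by positivity)]; linarith [Nat.cast_nonneg (α := ℝ) k]
  have hRHSpos : 0 < (1+s)^(A-1) * Real.exp ((|A-1| + R/2) * s^2) := by positivity
  rcases eq_or_lt_of_le (norm_nonneg (u + (k:ℂ))) with hz | hz
  · rw [div_eq_mul_inv, ← hz]; rw [zero_mul]; linarith
  · have hLpos : 0 < ‖u + (k:ℂ)‖ / ((k:ℝ)+1) := by positivity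
    rw [← Real.exp_log hLpos, ← Real.exp_log hRHSpos]
    apply Real.exp_le_exp.2
    -- compute log LHS
    have hsq : (‖u + (k:ℂ)‖ / ((k:ℝ)+1))^2 = 1 + (2*(A-1)*s + R*s^2) := by
      have h := norm_sq_id u k
      rw [← hs] at h
      have e : (‖u + (k:ℂ)‖ / ((k:ℝ)+1))^2 = ‖u + (k:ℂ)‖^2 * (1/((k:ℝ)+1))^2 := by ring
      rw [e, ← hs, h, hR]; ring
    set t := 2*(A-1)*s + R*s^2 with ht
    have h1t : 0 < 1 + t := by rw [← hsq]; positivity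
    have hlogL : Real.log (‖u + (k:ℂ)‖ / ((k:ℝ)+1)) = Real.log (1+t) / 2 := by
      have h2 : Real.log ((‖u + (k:ℂ)‖ / ((k:ℝ)+1))^2) = 2 * Real.log (‖u + (k:ℂ)‖ / ((k:ℝ)+1)) := by
        rw [Real.log_pow]; push_cast; ring
      rw [hsq] at h2
      linarith
    have hlogR : Real.log ((1+s)^(A-1) * Real.exp ((|A-1| + R/2) * s^2)) =
        (A-1) * Real.log (1+s) + (|A-1| + R/2) * s^2 := by
      rw [Real.log_mul (by positivity) (by positivity), Real.log_rpow (by linarith), Real.log_exp]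
    rw [hlogL, hlogR]
    have hlog1 : Real.log (1+t) ≤ t := by
      have := Real.log_le_sub_one_of_pos h1t; linarith
    have hd0 : 0 ≤ s - Real.log (1+s) := aux_log_nonneg (le_of_lt hs0)
    have hd1 : s - Real.log (1+s) ≤ s^2 := aux_sub_log (le_of_lt hs0)
    have habs : (A-1) * (s - Real.log (1+s)) ≤ |A-1| * s^2 :=
      le_trans (mul_le_mul_of_nonneg_right (le_abs_self _) hd0)
        (mul_le_mul_of_nonneg_left hd1 (abs_nonneg _))
    have hR0 : 0 ≤ R := by positivity
    nlinarith [hlog1]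

set_option maxHeartbeats 1000000 in
lemma stepB (v : ℂ) : ∃ M : ℝ, ∃ K : ℕ, ∀ k : ℕ, K ≤ k →
    ((k:ℝ)+1)/‖v + (k:ℂ)‖ ≤ (1 + 1/((k:ℝ)+1))^(1-v.re) * Real.exp (M * (1/((k:ℝ)+1))^2) := by
  set A := v.re with hA
  set R := (A-1)^2 + v.im^2 with hR
  set L := 2*|A-1| + R with hL
  refine ⟨|A-1| + 2*L^2, ⌈2*‖v‖⌉₊ + 1, fun k hk => ?_⟩
  set s := 1/((k:ℝ)+1) with hs
  have hk1 : (1:ℝ) ≤ (k:ℝ) := by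
    have : 1 ≤ k := le_trans (Nat.le_add_left 1 _) hk
    exact_mod_cast this
  have hs0 : 0 < s := by positivity
  have hs1 : s ≤ 1 := by rw [hs, div_le_one (by positivity)]; linarith
  -- lower bound on ‖v+k‖
  have hvk : ((k:ℝ)+1)/2 ≤ ‖v + (k:ℂ)‖ := by
    have h1 : (k:ℝ) - ‖v‖ ≤ ‖v + (k:ℂ)‖ := by
      have he : (k:ℂ) = (v + (k:ℂ)) + (-v) := by ring
      have h0 : ‖(k:ℂ)‖ ≤ ‖v + (k:ℂ)‖ + ‖v‖ := by
        calc ‖(k:ℂ)‖ = ‖(v + (k:ℂ)) + (-v)‖ := by rw [← he]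
          _ ≤ ‖v + (k:ℂ)‖ + ‖-v‖ := norm_add_le _ _
          _ = ‖v + (k:ℂ)‖ + ‖v‖ := by rw [norm_neg]
      have : ‖(k:ℂ)‖ = (k:ℝ) := Complex.norm_natCast k
      linarith
    have h2 : 2*‖v‖ + 1 ≤ (k:ℝ) := by
      have : (⌈2*‖v‖⌉₊ : ℝ) + 1 ≤ (k:ℝ) := by exact_mod_cast hk
      have := Nat.le_ceil (2*‖v‖)
      linarith
    linarith
  have hpos : 0 < ‖v + (k:ℂ)‖ := lt_of_lt_of_le (by positivity) hvk
  have hLpos : 0 < ((k:ℝ)+1)/‖v + (k:ℂ)‖ := by positivity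
  have hRHSpos : 0 < (1+s)^(1-A) * Real.exp ((|A-1| + 2*L^2) * s^2) := by positivity
  rw [← Real.exp_log hLpos, ← Real.exp_log hRHSpos]
  apply Real.exp_le_exp.2
  have h := norm_sq_id v k
  rw [← hs] at h
  set t := 2*(A-1)*s + R*s^2 with ht
  have hsq : ‖v + (k:ℂ)‖^2 * s^2 = 1 + t := by rw [h, ht, hR, hA]; ring
  have h1t4 : (1:ℝ)/4 ≤ 1 + t := by
    have : (((k:ℝ)+1)/2)^2 * s^2 ≤ ‖v + (k:ℂ)‖^2 * s^2 :=
      mul_le_mul_of_nonneg_right (by nlinarith) (by positivity)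
    have he : (((k:ℝ)+1)/2)^2 * s^2 = 1/4 := by
      rw [hs]; field_simp; ring
    rw [hsq] at this; rw [he] at this; exact this
  have h1t : 0 < 1 + t := lt_of_lt_of_le (by norm_num) h1t4
  -- |t| ≤ L * s
  have hR0 : 0 ≤ R := by positivity
  have htabs : t^2 ≤ (L*s)^2 := by
    have h1 : |t| ≤ L*s := by
      rw [ht, hL]
      rw [abs_le]
      constructor <;>
        nlinarith [le_abs_self (A-1), neg_abs_le (A-1), hs0.le, hs1, hR0,
          mul_nonneg hR0 (sq_nonneg s), mul_nonneg (abs_nonneg (A-1)) hs0.le]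
    calc t^2 = |t|^2 := (sq_abs t).symm
      _ ≤ (L*s)^2 := pow_le_pow_left₀ (abs_nonneg t) h1 2
  -- log LHS = -(1/2) log(1+t)
  have hlogL : Real.log (((k:ℝ)+1)/‖v + (k:ℂ)‖) = -(Real.log (1+t) / 2) := by
    have h2 : Real.log ((‖v + (k:ℂ)‖ * s)^2) = 2 * Real.log (‖v + (k:ℂ)‖ * s) := by
      rw [Real.log_pow]; push_cast; ring
    have h3 : (‖v + (k:ℂ)‖ * s)^2 = 1 + t := by rw [← hsq]; ring
    rw [h3] at h2
    have h4 : ((k:ℝ)+1)/‖v + (k:ℂ)‖ = (‖v + (k:ℂ)‖ * s)⁻¹ := by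
      rw [hs]; field_simp
    rw [h4, Real.log_inv]
    linarith
  have hlogR : Real.log ((1+s)^(1-A) * Real.exp ((|A-1| + 2*L^2) * s^2)) =
      (1-A) * Real.log (1+s) + (|A-1| + 2*L^2) * s^2 := by
    rw [Real.log_mul (by positivity) (by positivity), Real.log_rpow (by linarith), Real.log_exp]
  rw [hlogL, hlogR]
  -- log(1+t) ≥ 1 - 1/(1+t)
  have hlow : 1 - (1+t)⁻¹ ≤ Real.log (1+t) := by
    have h5 := Real.log_le_sub_one_of_pos (x := (1+t)⁻¹) (by positivity)
    rw [Real.log_inv] at h5; linarith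
  -- so -(log(1+t)/2) ≤ -t/2 + t^2/(2(1+t)) ≤ -t/2 + 2t^2
  have hstep1 : -(Real.log (1+t) / 2) ≤ -t/2 + 2*t^2 := by
    have h6 : 1 - (1+t)⁻¹ = t/(1+t) := by field_simp; ring
    rw [h6] at hlow
    have h7 : t/(1+t) = t - t^2/(1+t) := by field_simp; ring
    have h8 : t^2/(1+t) ≤ 4*t^2 := by
      rw [div_le_iff₀ h1t]; nlinarith [sq_nonneg t, h1t4]
    nlinarith
  have hd0 : 0 ≤ s - Real.log (1+s) := aux_log_nonneg (le_of_lt hs0)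
  have hd1 : s - Real.log (1+s) ≤ s^2 := aux_sub_log (le_of_lt hs0)
  have habs : (1-A) * (s - Real.log (1+s)) ≤ |A-1| * s^2 := by
    have : (1-A) ≤ |A-1| := by rw [abs_sub_comm]; exact le_abs_self _
    calc (1-A) * (s - Real.log (1+s)) ≤ |A-1| * (s - Real.log (1+s)) :=
          mul_le_mul_of_nonneg_right this hd0
      _ ≤ |A-1| * s^2 := mul_le_mul_of_nonneg_left hd1 (abs_nonneg _)
  -- combine:  -(log(1+t)/2) ≤ -t/2 + 2t² = (1-A)s - Rs²/2 + 2t² ≤ (1-A)s + 2L²s²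
  have e1 : -t/2 = (1-A)*s - R*s^2/2 := by rw [ht]; ring
  have e2 : 2*t^2 ≤ 2*L^2*s^2 := by nlinarith [htabs]
  have e3 : 0 ≤ R * s^2 := mul_nonneg hR0 (sq_nonneg s)
  clear_value A R L s t
  linarith [hstep1, habs, e1, e2, e3]

lemma prod_add_one_eq_factorial (n : ℕ) : ∏ k ∈ range n, ((k:ℝ)+1) = (n.factorial : ℝ) := by
  induction n with
  | zero => simp
  | succ n ih => rw [Finset.prod_range_succ, ih, Nat.factorial_succ]; push_cast; ring

lemma upperPoch (u : ℂ) : ∃ C, 0 < C ∧ ∀ n : ℕ,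
    ∏ k ∈ range n, ‖u + (k:ℂ)‖ ≤ C * (n.factorial : ℝ) * ((n:ℝ)+1)^(u.re-1) := by
  obtain ⟨M, hM⟩ := stepA u
  obtain ⟨C, hC, hCb⟩ := core (fun k => ‖u + (k:ℂ)‖/((k:ℝ)+1)) (fun k => by positivity)
    (u.re-1) M 0 (fun k _ => hM k)
  refine ⟨C, hC, fun n => ?_⟩
  have hfac : (0:ℝ) < (n.factorial : ℝ) := by exact_mod_cast n.factorial_pos
  have h1 : ∏ k ∈ range n, (‖u + (k:ℂ)‖/((k:ℝ)+1)) =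
      (∏ k ∈ range n, ‖u + (k:ℂ)‖) / (n.factorial : ℝ) := by
    rw [Finset.prod_div_distrib, prod_add_one_eq_factorial]
  have h2 := hCb n
  rw [h1, div_le_iff₀ hfac] at h2
  calc ∏ k ∈ range n, ‖u + (k:ℂ)‖ ≤ C * ((n:ℝ)+1)^(u.re-1) * (n.factorial : ℝ) := h2
    _ = C * (n.factorial : ℝ) * ((n:ℝ)+1)^(u.re-1) := by ring

lemma lowerPoch (v : ℂ) (hv : ∀ k : ℕ, v + (k:ℂ) ≠ 0) : ∃ C, 0 < C ∧ ∀ n : ℕ,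
    C * (n.factorial : ℝ) * ((n:ℝ)+1)^(v.re-1) ≤ ∏ k ∈ range n, ‖v + (k:ℂ)‖ := by
  obtain ⟨M, K, hM⟩ := stepB v
  obtain ⟨C, hC, hCb⟩ := core (fun k => ((k:ℝ)+1)/‖v + (k:ℂ)‖) (fun k => by positivity)
    (1-v.re) M K hM
  refine ⟨C⁻¹, by positivity, fun n => ?_⟩
  have hfac : (0:ℝ) < (n.factorial : ℝ) := by exact_mod_cast n.factorial_pos
  have hprod : (0:ℝ) < ∏ k ∈ range n, ‖v + (k:ℂ)‖ :=
    Finset.prod_pos fun k _ => norm_pos_iff.mpr (hv k)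
  have h1 : ∏ k ∈ range n, (((k:ℝ)+1)/‖v + (k:ℂ)‖) =
      (n.factorial : ℝ) / ∏ k ∈ range n, ‖v + (k:ℂ)‖ := by
    rw [Finset.prod_div_distrib, prod_add_one_eq_factorial]
  have h2 := hCb n
  rw [h1, div_le_iff₀ hprod] at h2
  have hrp : (0:ℝ) < ((n:ℝ)+1)^(v.re-1) := by positivity
  have hrp2 : ((n:ℝ)+1)^(1-v.re) * ((n:ℝ)+1)^(v.re-1) = 1 := by
    rw [← Real.rpow_add (by positivity)]; norm_num
  calc C⁻¹ * (n.factorial:ℝ) * (((n:ℝ))+1)^(v.re-1)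
      ≤ C⁻¹ * (C * ((n:ℝ)+1)^(1-v.re) * ∏ k ∈ range n, ‖v + (k:ℂ)‖) * ((n:ℝ)+1)^(v.re-1) := by
        apply mul_le_mul_of_nonneg_right _ hrp.le
        exact mul_le_mul_of_nonneg_left h2 (by positivity)
    _ = (C⁻¹*C) * (((n:ℝ)+1)^(1-v.re) * ((n:ℝ)+1)^(v.re-1)) * ∏ k ∈ range n, ‖v + (k:ℂ)‖ := by
        ring
    _ = ∏ k ∈ range n, ‖v + (k:ℂ)‖ := by
        rw [hrp2, inv_mul_cancel₀ (ne_of_gt hC), one_mul, one_mul]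

lemma single_sum {s : ℝ} (hs : s < -1) : Summable (fun n : ℕ => ((n:ℝ)+1)^s) := by
  have h1 : Summable (fun n : ℕ => ((n:ℝ))^s) := Real.summable_nat_rpow.2 hs
  have h2 := (summable_nat_add_iff (f := fun n : ℕ => ((n:ℝ))^s) 1).2 h1
  convert h2 using 2 with n
  · rfl
  push_cast
  rfl

set_option maxHeartbeats 2000000 in
lemma sum2 (P Q R : ℝ) (h1 : P+Q < -1) (h2 : P+R < -1) (h3 : P+Q+R < -2) :
    Summable (fun p : ℕ×ℕ => ((p.1:ℝ)+(p.2:ℝ)+1)^P * (((p.1:ℝ)+1)^Q * ((p.2:ℝ)+1)^R)) := by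
  obtain ⟨σ, τ, hσ, hτ, hb⟩ : ∃ σ τ : ℝ, σ+Q < -1 ∧ τ+R < -1 ∧
      ∀ m n : ℕ, ((m:ℝ)+(n:ℝ)+1)^P ≤ ((m:ℝ)+1)^σ * ((n:ℝ)+1)^τ := by
    rcases le_or_gt 0 P with hP | hP
    · refine ⟨P, P, by linarith, by linarith, fun m n => ?_⟩
      have hmn : ((m:ℝ)+(n:ℝ)+1) ≤ ((m:ℝ)+1) * ((n:ℝ)+1) := by
        nlinarith [Nat.cast_nonneg (α := ℝ) m, Nat.cast_nonneg (α := ℝ) n,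
          mul_nonneg (Nat.cast_nonneg (α := ℝ) m) (Nat.cast_nonneg (α := ℝ) n)]
      calc ((m:ℝ)+(n:ℝ)+1)^P ≤ (((m:ℝ)+1) * ((n:ℝ)+1))^P :=
            Real.rpow_le_rpow (by positivity) hmn hP
        _ = ((m:ℝ)+1)^P * ((n:ℝ)+1)^P := Real.mul_rpow (by positivity) (by positivity)
    · have hP' : 0 < -P := by linarith
      set θ₁ := (1+R)/(-P) with hθ₁
      set θ₂ := (-1-P-Q)/(-P) with hθ₂
      have hθ₁2 : θ₁ < θ₂ := by
        rw [hθ₁, hθ₂, div_lt_div_iff_of_pos_right hP']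
        linarith
      have hθ₁1 : θ₁ < 1 := by rw [hθ₁, div_lt_one hP']; linarith
      have hθ₂0 : 0 < θ₂ := div_pos (by linarith) hP'
      set θ := (max θ₁ 0 + min θ₂ 1)/2 with hθ
      have hmaxlt : max θ₁ 0 < min θ₂ 1 := by
        apply max_lt <;> apply lt_min
        · exact hθ₁2
        · exact hθ₁1
        · exact hθ₂0
        · norm_num
      have hθ0 : 0 ≤ θ := by
        have := le_max_right θ₁ 0
        rw [hθ]; linarith
      have hθ1 : θ ≤ 1 := by
        have := min_le_right θ₂ 1
        rw [hθ]; linarith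
      have hθlt1 : θ₁ < θ := by
        have := le_max_left θ₁ 0
        rw [hθ]; linarith
      have hθlt2 : θ < θ₂ := by
        have := min_le_left θ₂ 1
        rw [hθ]; linarith
      refine ⟨(1-θ)*P, θ*P, ?_, ?_, ?_⟩
      · -- (1-θ)P + Q < -1, from θ < θ₂
        have h4 : θ * (-P) < -1-P-Q := by
          have := (mul_lt_mul_of_pos_right hθlt2 hP')
          rwa [hθ₂, div_mul_cancel₀ _ (ne_of_gt hP')] at this
        nlinarith
      · -- θP + R < -1, from θ₁ < θ
        have h4 : 1+R < θ * (-P) := by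
          have := (mul_lt_mul_of_pos_right hθlt1 hP')
          rwa [hθ₁, div_mul_cancel₀ _ (ne_of_gt hP')] at this
        nlinarith
      · intro m n
        have hm1 : (0:ℝ) < (m:ℝ)+1 := by positivity
        have hn1 : (0:ℝ) < (n:ℝ)+1 := by positivity
        have hmn : (0:ℝ) < (m:ℝ)+(n:ℝ)+1 := by positivity
        have hgeo : ((m:ℝ)+1)^(1-θ) * ((n:ℝ)+1)^θ ≤ ((m:ℝ)+(n:ℝ)+1) := by
          calc ((m:ℝ)+1)^(1-θ) * ((n:ℝ)+1)^θ
              ≤ ((m:ℝ)+(n:ℝ)+1)^(1-θ) * ((m:ℝ)+(n:ℝ)+1)^θ := by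
                apply mul_le_mul
                · exact Real.rpow_le_rpow hm1.le (by linarith [Nat.cast_nonneg (α := ℝ) n]) (by linarith)
                · exact Real.rpow_le_rpow hn1.le (by linarith [Nat.cast_nonneg (α := ℝ) m]) hθ0
                · positivity
                · positivity
            _ = ((m:ℝ)+(n:ℝ)+1)^((1-θ)+θ) := (Real.rpow_add hmn _ _).symm
            _ = ((m:ℝ)+(n:ℝ)+1) := by norm_num
        calc ((m:ℝ)+(n:ℝ)+1)^P ≤ (((m:ℝ)+1)^(1-θ) * ((n:ℝ)+1)^θ)^P :=
              Real.rpow_le_rpow_of_nonpos (by positivity) hgeo (le_of_lt hP)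
          _ = ((m:ℝ)+1)^((1-θ)*P) * ((n:ℝ)+1)^(θ*P) := by
              rw [Real.mul_rpow (by positivity) (by positivity),
                ← Real.rpow_mul hm1.le, ← Real.rpow_mul hn1.le]
  have hmaj : Summable (fun p : ℕ×ℕ => ((p.1:ℝ)+1)^(σ+Q) * ((p.2:ℝ)+1)^(τ+R)) :=
    Summable.mul_of_nonneg (single_sum hσ) (single_sum hτ)
      (fun m => by positivity) (fun n => by positivity)
  apply Summable.of_nonneg_of_le (fun p => by positivity) _ hmaj
  intro p
  have hm1 : (0:ℝ) < (p.1:ℝ)+1 := by positivity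
  have hn1 : (0:ℝ) < (p.2:ℝ)+1 := by positivity
  calc ((p.1:ℝ)+(p.2:ℝ)+1)^P * (((p.1:ℝ)+1)^Q * ((p.2:ℝ)+1)^R)
      ≤ (((p.1:ℝ)+1)^σ * ((p.2:ℝ)+1)^τ) * (((p.1:ℝ)+1)^Q * ((p.2:ℝ)+1)^R) :=
        mul_le_mul_of_nonneg_right (hb p.1 p.2) (by positivity)
    _ = ((p.1:ℝ)+1)^(σ+Q) * ((p.2:ℝ)+1)^(τ+R) := by
        rw [Real.rpow_add hm1, Real.rpow_add hn1]; ring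

lemma norm_poch (u : ℂ) (n : ℕ) : ‖poch u n‖ = ∏ k ∈ range n, ‖u + (k:ℂ)‖ := by
  rw [poch, norm_prod]

lemma nonzero_of_poch (u : ℂ) (hu : ∀ n : ℕ, poch u n ≠ 0) (k : ℕ) : u + (k:ℂ) ≠ 0 := by
  intro h
  exact hu (k+1) (Finset.prod_eq_zero (Finset.self_mem_range_succ k) h)

/-- Pure real-number algebra for the term bound. -/
lemma final_algebra
    (Pa Pb1 Pb2 Pb3 X Y Pc Pd Fm Fn Fmn Ca C1 C2 C3 cc cd sc sp md mq nr sa u1 u2 : ℝ)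
    (hPa0 : 0 ≤ Pa) (hPb10 : 0 ≤ Pb1) (hPb20 : 0 ≤ Pb2) (hPb30 : 0 ≤ Pb3)
    (hX0 : 0 ≤ X) (hX1 : X ≤ 1) (hY0 : 0 ≤ Y) (hY1 : Y ≤ 1)
    (hCa : 0 < Ca) (hC1 : 0 < C1) (hC2 : 0 < C2) (hC3 : 0 < C3)
    (hcc : 0 < cc) (hcd : 0 < cd)
    (hFm : 0 < Fm) (hFn : 0 < Fn) (hFmn : 0 < Fmn)
    (hsc : 0 < sc) (hsp : 0 < sp) (hmd : 0 < md) (hmq : 0 < mq) (hnr : 0 < nr)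
    (hu10 : 0 < u1) (hu20 : 0 < u2)
    (hsa : sa = sc * sp) (hu : u1 * u2 = md * mq)
    (hA : Pa ≤ Ca * Fmn * sa) (hB1 : Pb1 ≤ C1 * Fm * u1) (hB2 : Pb2 ≤ C2 * Fm * u2)
    (hB3 : Pb3 ≤ C3 * Fn * nr)
    (hCl : cc * Fmn * sc ≤ Pc) (hDl : cd * Fm * md ≤ Pd) :
    Pa * Pb1 * Pb2 * Pb3 * X * Y / (Pc * Pd * (Fm * Fn)) ≤
      Ca * C1 * C2 * C3 / (cc * cd) * (sp * (mq * nr)) := by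
  have hsa0 : 0 < sc * sp := mul_pos hsc hsp
  have hA' : Pa ≤ Ca * Fmn * (sc * sp) := by rw [← hsa]; exact hA
  have pA : 0 < Ca * Fmn * (sc * sp) := mul_pos (mul_pos hCa hFmn) hsa0
  have p1 : 0 < C1 * Fm * u1 := mul_pos (mul_pos hC1 hFm) hu10
  have p2 : 0 < C2 * Fm * u2 := mul_pos (mul_pos hC2 hFm) hu20
  have p3 : 0 < C3 * Fn * nr := mul_pos (mul_pos hC3 hFn) hnr
  have hPs : 0 ≤ Pa * Pb1 * Pb2 * Pb3 :=
    mul_nonneg (mul_nonneg (mul_nonneg hPa0 hPb10) hPb20) hPb30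
  have hDenB : 0 < (cc * Fmn * sc) * (cd * Fm * md) * (Fm * Fn) :=
    mul_pos (mul_pos (mul_pos (mul_pos hcc hFmn) hsc) (mul_pos (mul_pos hcd hFm) hmd))
      (mul_pos hFm hFn)
  have hnum : Pa * Pb1 * Pb2 * Pb3 * X * Y ≤
      (Ca * Fmn * (sc * sp)) * (C1 * Fm * u1) * (C2 * Fm * u2) * (C3 * Fn * nr) := by
    have s2 : Pa * Pb1 * Pb2 * Pb3 * X * Y ≤ Pa * Pb1 * Pb2 * Pb3 * X :=
      mul_le_of_le_one_right (mul_nonneg hPs hX0) hY1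
    have s1 : Pa * Pb1 * Pb2 * Pb3 * X ≤ Pa * Pb1 * Pb2 * Pb3 :=
      mul_le_of_le_one_right hPs hX1
    have t1 : Pa * Pb1 ≤ (Ca * Fmn * (sc * sp)) * (C1 * Fm * u1) :=
      mul_le_mul hA' hB1 hPb10 pA.le
    have t2 : Pa * Pb1 * Pb2 ≤ (Ca * Fmn * (sc * sp)) * (C1 * Fm * u1) * (C2 * Fm * u2) :=
      mul_le_mul t1 hB2 hPb20 (mul_pos pA p1).le
    have t3 : Pa * Pb1 * Pb2 * Pb3 ≤
        (Ca * Fmn * (sc * sp)) * (C1 * Fm * u1) * (C2 * Fm * u2) * (C3 * Fn * nr) :=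
      mul_le_mul t2 hB3 hPb30 (mul_pos (mul_pos pA p1) p2).le
    exact le_trans s2 (le_trans s1 t3)
  have hden : (cc * Fmn * sc) * (cd * Fm * md) * (Fm * Fn) ≤ Pc * Pd * (Fm * Fn) := by
    have : (cc * Fmn * sc) * (cd * Fm * md) ≤ Pc * Pd :=
      mul_le_mul hCl hDl (mul_pos (mul_pos hcd hFm) hmd).le
        (lt_of_lt_of_le (mul_pos (mul_pos hcc hFmn) hsc) hCl).le
    exact mul_le_mul_of_nonneg_right this (mul_pos hFm hFn).le
  calc Pa * Pb1 * Pb2 * Pb3 * X * Y / (Pc * Pd * (Fm * Fn))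
      ≤ ((Ca * Fmn * (sc * sp)) * (C1 * Fm * u1) * (C2 * Fm * u2) * (C3 * Fn * nr)) /
          ((cc * Fmn * sc) * (cd * Fm * md) * (Fm * Fn)) :=
        div_le_div₀ (mul_pos (mul_pos (mul_pos pA p1) p2) p3).le hnum hDenB hden
    _ = ((Ca*C1*C2*C3*(sp*(mq*nr))) * (Fmn*Fm*Fm*Fn*sc*md)) / ((cc*cd) * (Fmn*Fm*Fm*Fn*sc*md)) := by
        congr 1
        · linear_combination (Ca*C1*C2*C3*Fmn*Fm*Fm*Fn*sc*sp*nr) * hu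
        · ring
    _ = (Ca*C1*C2*C3*(sp*(mq*nr))) / (cc*cd) :=
        mul_div_mul_right _ _ (by positivity)
    _ = Ca * C1 * C2 * C3 / (cc * cd) * (sp * (mq * nr)) := mul_div_right_comm _ _ _

set_option maxHeartbeats 2000000 in
/-- If `Re(c+d−a−b₁−b₂) > 0`, `Re(c−a−b′) > 0` and `Re(c+d−a−b₁−b₂−b′) > 0` (and `c`, `d`
are not nonpositive integers), then the Kampé de Fériet double series converges absolutely
for `|x| ≤ 1` and `|y| ≤ 1`. -/
theorem kampe_abs_convergence (a b₁ b₂ b' c d : ℂ)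
    (hc : ∀ n : ℕ, poch c n ≠ 0) (hd : ∀ n : ℕ, poch d n ≠ 0)
    (h1 : 0 < (c + d - a - b₁ - b₂).re)
    (h2 : 0 < (c - a - b').re)
    (h3 : 0 < (c + d - a - b₁ - b₂ - b').re)
    (x y : ℂ) (hx : ‖x‖ ≤ 1) (hy : ‖y‖ ≤ 1) :
    Summable (fun p : ℕ × ℕ => ‖kampeTerm a b₁ b₂ b' c d x y p‖) := by
  obtain ⟨Ca, hCa, Ha⟩ := upperPoch a
  obtain ⟨C1, hC1, H1⟩ := upperPoch b₁
  obtain ⟨C2, hC2, H2⟩ := upperPoch b₂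
  obtain ⟨C3, hC3, H3⟩ := upperPoch b'
  obtain ⟨cc, hcc, Hc⟩ := lowerPoch c (nonzero_of_poch c hc)
  obtain ⟨cd, hcd, Hd⟩ := lowerPoch d (nonzero_of_poch d hd)
  set P := a.re - c.re with hP
  set Q := b₁.re + b₂.re - d.re - 1 with hQ
  set R := b'.re - 1 with hR
  have hPQ : P + Q < -1 := by
    simp only [Complex.sub_re, Complex.add_re] at h1; rw [hP, hQ]; linarith
  have hPR : P + R < -1 := by
    simp only [Complex.sub_re, Complex.add_re] at h2; rw [hP, hR]; linarith
  have hPQR : P + Q + R < -2 := by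
    simp only [Complex.sub_re, Complex.add_re] at h3; rw [hP, hQ, hR]; linarith
  have hsum : Summable (fun p : ℕ×ℕ =>
      Ca*C1*C2*C3/(cc*cd) * (((p.1:ℝ)+(p.2:ℝ)+1)^P * (((p.1:ℝ)+1)^Q * ((p.2:ℝ)+1)^R))) :=
    (sum2 P Q R hPQ hPR hPQR).mul_left _
  apply Summable.of_nonneg_of_le (fun p => norm_nonneg _) _ hsum
  rintro ⟨m, n⟩
  simp only
  have hfm : (0:ℝ) < (m.factorial : ℝ) := by exact_mod_cast m.factorial_pos
  have hfn : (0:ℝ) < (n.factorial : ℝ) := by exact_mod_cast n.factorial_pos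
  have hfmn : (0:ℝ) < ((m+n).factorial : ℝ) := by exact_mod_cast (m+n).factorial_pos
  have hS : (0:ℝ) < (m:ℝ)+(n:ℝ)+1 := by positivity
  have hM1 : (0:ℝ) < (m:ℝ)+1 := by positivity
  have hN1 : (0:ℝ) < (n:ℝ)+1 := by positivity
  have hnorm : ‖kampeTerm a b₁ b₂ b' c d x y (m, n)‖ =
      (∏ k ∈ range (m+n), ‖a + (k:ℂ)‖) * (∏ k ∈ range m, ‖b₁ + (k:ℂ)‖) *
        (∏ k ∈ range m, ‖b₂ + (k:ℂ)‖) * (∏ k ∈ range n, ‖b' + (k:ℂ)‖) *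
        ‖x‖^m * ‖y‖^n /
      ((∏ k ∈ range (m+n), ‖c + (k:ℂ)‖) * (∏ k ∈ range m, ‖d + (k:ℂ)‖) *
        ((m.factorial : ℝ) * (n.factorial : ℝ))) := by
    rw [kampeTerm]
    simp only [norm_div, norm_mul, norm_pow, norm_poch]
    rw [Complex.norm_natCast, Complex.norm_natCast]
    ring
  rw [hnorm]
  have hcast : ((m+n:ℕ):ℝ) = (m:ℝ)+(n:ℝ) := by push_cast; ring
  have Ha' := Ha (m+n)
  have Hc' := Hc (m+n)
  rw [hcast] at Ha' Hc'
  have H3' := H3 n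
  rw [hR] at H3'
  have ea : ((m:ℝ)+(n:ℝ)+1)^(a.re-1) = ((m:ℝ)+(n:ℝ)+1)^(c.re-1) * ((m:ℝ)+(n:ℝ)+1)^P := by
    rw [← Real.rpow_add hS]; congr 1; rw [hP]; ring
  have eu : ((m:ℝ)+1)^(b₁.re-1) * ((m:ℝ)+1)^(b₂.re-1) =
      ((m:ℝ)+1)^(d.re-1) * ((m:ℝ)+1)^Q := by
    rw [← Real.rpow_add hM1, ← Real.rpow_add hM1]; congr 1; rw [hQ]; ring
  exact final_algebra _ _ _ _ _ _ _ _ _ _ _ _ _ _ _ _ _ _ _ _ _ _ _ _ _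
    (Finset.prod_nonneg fun k _ => norm_nonneg _)
    (Finset.prod_nonneg fun k _ => norm_nonneg _)
    (Finset.prod_nonneg fun k _ => norm_nonneg _)
    (Finset.prod_nonneg fun k _ => norm_nonneg _)
    (pow_nonneg (norm_nonneg x) m) (pow_le_one₀ (norm_nonneg x) hx)
    (pow_nonneg (norm_nonneg y) n) (pow_le_one₀ (norm_nonneg y) hy)
    hCa hC1 hC2 hC3 hcc hcd hfm hfn hfmn
    (Real.rpow_pos_of_pos hS _) (Real.rpow_pos_of_pos hS _)
    (Real.rpow_pos_of_pos hM1 _) (Real.rpow_pos_of_pos hM1 _)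
    (Real.rpow_pos_of_pos hN1 _)
    (Real.rpow_pos_of_pos hM1 _) (Real.rpow_pos_of_pos hM1 _)
    ea eu Ha' (H1 m) (H2 m) H3' Hc' (Hd m)
end

section
/- On the Hesse cubic X_t : x³+y³+1 = 3txy, one has d(y²/x) = ((x³−1)/x³) · (xy·dy/(x²−ty)) as rational differential forms, i.e. the form η_t = xy·dy/(x²−ty) satisfies ρ*(η_t) = x^{−3} η_t ≡ η_t modulo exact forms where ρ cyclically permutes the projective coordinates. -/
/-- On the Hesse cubic `x³ + y³ + 1 = 3txy` (with `t³ ≠ 1`), one has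
`d(y²/x) = ((x³−1)/x³) · (xy·dy/(x²−ty))` as differential forms: along any differentiable
path `(x(s), y(s))` on the curve with `x(s) ≠ 0` and `x(s)² − t·y(s) ≠ 0`, the derivative of
`y²/x` equals `((x³−1)/x³)·(x·y·y'/(x²−ty))`. -/
theorem hesse_eta_exact_relation (t : ℂ) (ht : t ^ 3 ≠ 1)
    (x y : ℂ → ℂ) (s x' y' : ℂ)
    (hx : HasDerivAt x x' s) (hy : HasDerivAt y y' s)
    (hcurve : ∀ u : ℂ, (x u) ^ 3 + (y u) ^ 3 + 1 = 3 * t * x u * y u)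
    (hx0 : x s ≠ 0) (hden : (x s) ^ 2 - t * y s ≠ 0) :
    HasDerivAt (fun u : ℂ => (y u) ^ 2 / x u)
      (((x s) ^ 3 - 1) / (x s) ^ 3 * (x s * y s * y' / ((x s) ^ 2 - t * y s))) s := by
  have hg : HasDerivAt (fun u => x u ^ 3 + y u ^ 3 + 1 - 3 * t * x u * y u)
      (3 * x s ^ 2 * x' + 3 * y s ^ 2 * y' -
        3 * t * (x' * y s + x s * y')) s := by
    have h1 := ((hx.pow 3).add (hy.pow 3)).add_const 1
    have h2 := ((hx.const_mul (3 * t)).mul hy)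
    have h3 : HasDerivAt (fun u => x u ^ 3 + y u ^ 3 + 1 - 3 * t * x u * y u) _ s := h1.sub h2
    convert h3 using 1
    push_cast
    ring
  have hg0 : HasDerivAt (fun _ : ℂ => (0 : ℂ))
      (3 * x s ^ 2 * x' + 3 * y s ^ 2 * y' - 3 * t * (x' * y s + x s * y')) s := by
    convert hg using 1
    funext u
    have := hcurve u
    linear_combination -this
  have hrel : x s ^ 2 * x' + y s ^ 2 * y' = t * (x' * y s + x s * y') := by
    have h0 := (hasDerivAt_const s (0 : ℂ)).unique hg0
    linear_combination -h0 / 3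
  have hdiv : HasDerivAt (fun u => y u ^ 2 / x u) _ s := (hy.pow 2).div hx hx0
  convert hdiv using 1
  have hc := hcurve s
  simp only [Pi.pow_apply]
  field_simp
  rw [div_eq_iff (by rwa [mul_comm t] at hden)]
  push_cast
  linear_combination (-(y s * y')) * hc + (y s ^ 2) * hrel
end
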